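/- Let theta be the 2x3 matrix over K[u,v] with rows (p0,p1,p2) and (q0,q1,q2), where all entries are homogeneous of degree n. If the three 2x2 minors of theta have no common zero in P^1 (equivalently, the ideal generated by the minors contains a power of (u,v)), then the kernel of the map K[u,v](-n)^3 -> K[u,v]^2 given by theta is a free module of rank 1 generated by the vector of signed 2x2 minors (q1*p2 - p1*q2, p0*q2 - q0*p2, q0*p1 - p0*q1). -/

import Mathlib

open MvPolynomial

lemma primeX0 (K : Type*) [Field K] : Prime (X 0 : MvPolynomial (Fin 2) K) := by
  have := MulEquiv.prime_iff (MvPolynomial.finSuccEquiv K 1).toMulEquiv (p := (X 0 : MvPolynomial (Fin 2) K))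
  rw [← this]
  simpa [MvPolynomial.finSuccEquiv_X_zero] using Polynomial.prime_X

lemma notdvd (K : Type*) [Field K] : ¬ (X 0 : MvPolynomial (Fin 2) K) ∣ X 1 := by
  intro ⟨t, ht⟩
  have := congrArg (MvPolynomial.eval (fun i : Fin 2 => if i = 1 then (1:K) else 0)) ht
  simp at this


set_option maxHeartbeats 1000000

/-- If the `2×2` minors of `θ = [[p0,p1,p2],[q0,q1,q2]]` (entries homogeneous of
degree `n` in `K[u,v]`) generate an ideal containing a power of `(u,v)`, then the
kernel of `θ : R³ → R²` is free of rank one, generated by the vector of signed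
`2×2` minors. -/
theorem stmt_11 (K : Type*) [Field K] (n : ℕ)
    (p q : Fin 3 → MvPolynomial (Fin 2) K)
    (hp : ∀ i, (p i).IsHomogeneous n) (hq : ∀ i, (q i).IsHomogeneous n)
    (hbpf : ∃ k : ℕ,
      (Ideal.span {X 0, X 1} : Ideal (MvPolynomial (Fin 2) K)) ^ k ≤
        Ideal.span {q 1 * p 2 - p 1 * q 2, p 0 * q 2 - q 0 * p 2,
          q 0 * p 1 - p 0 * q 1}) :
    LinearMap.ker
        (Matrix.mulVecLin (Matrix.of ![![p 0, p 1, p 2], ![q 0, q 1, q 2]])) =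
      Submodule.span (MvPolynomial (Fin 2) K)
        {![q 1 * p 2 - p 1 * q 2, p 0 * q 2 - q 0 * p 2, q 0 * p 1 - p 0 * q 1]} ∧
      ![q 1 * p 2 - p 1 * q 2, p 0 * q 2 - q 0 * p 2, q 0 * p 1 - p 0 * q 1] ≠ 0 := by
  obtain ⟨k, hk⟩ := hbpf
  have hX0mem : (X 0 : MvPolynomial (Fin 2) K) ∈
      (Ideal.span {X 0, X 1} : Ideal (MvPolynomial (Fin 2) K)) :=
    Ideal.subset_span (Set.mem_insert _ _)
  have hX1mem : (X 1 : MvPolynomial (Fin 2) K) ∈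
      (Ideal.span {X 0, X 1} : Ideal (MvPolynomial (Fin 2) K)) :=
    Ideal.subset_span (Set.mem_insert_of_mem _ rfl)
  have hX0 : (X 0 : MvPolynomial (Fin 2) K) ^ k ∈
      Ideal.span {q 1 * p 2 - p 1 * q 2, p 0 * q 2 - q 0 * p 2, q 0 * p 1 - p 0 * q 1} := hk (Ideal.pow_mem_pow hX0mem k)
  have hX1 : (X 1 : MvPolynomial (Fin 2) K) ^ k ∈
      Ideal.span {q 1 * p 2 - p 1 * q 2, p 0 * q 2 - q 0 * p 2, q 0 * p 1 - p 0 * q 1} := hk (Ideal.pow_mem_pow hX1mem k)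
  have hX0ne : (X 0 : MvPolynomial (Fin 2) K) ^ k ≠ 0 :=
    pow_ne_zero _ (MvPolynomial.X_ne_zero 0)
  have hmne : (![q 1 * p 2 - p 1 * q 2, p 0 * q 2 - q 0 * p 2, q 0 * p 1 - p 0 * q 1] : Fin 3 → MvPolynomial (Fin 2) K) ≠ 0 := by
    intro h
    have h0 : (q 1 * p 2 - p 1 * q 2) = 0 := congrFun h 0
    have h1 : (p 0 * q 2 - q 0 * p 2) = 0 := congrFun h 1
    have h2 : (q 0 * p 1 - p 0 * q 1) = 0 := congrFun h 2
    rw [h0, h1, h2] at hX0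
    simp only [Set.insert_idem, Set.pair_eq_singleton, Ideal.span_singleton_eq_bot.mpr rfl,
      Ideal.mem_bot] at hX0
    exact hX0ne hX0
  refine ⟨le_antisymm ?_ ?_, hmne⟩
  · -- ker ≤ span
    intro x hx
    rw [LinearMap.mem_ker, Matrix.mulVecLin_apply] at hx
    have E1 : p 0 * x 0 + p 1 * x 1 + p 2 * x 2 = 0 := by
      have := congrFun hx 0
      simpa [Matrix.mulVec, dotProduct, Fin.sum_univ_three] using this
    have E2 : q 0 * x 0 + q 1 * x 1 + q 2 * x 2 = 0 := by
      have := congrFun hx 1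
      simpa [Matrix.mulVec, dotProduct, Fin.sum_univ_three] using this
    have h01 : (p 0 * q 2 - q 0 * p 2) * x 0 = (q 1 * p 2 - p 1 * q 2) * x 1 := by
      linear_combination q 2 * E1 - p 2 * E2
    have h02 : (q 0 * p 1 - p 0 * q 1) * x 0 = (q 1 * p 2 - p 1 * q 2) * x 2 := by
      linear_combination p 1 * E2 - q 1 * E1
    have h12 : (q 0 * p 1 - p 0 * q 1) * x 1 = (p 0 * q 2 - q 0 * p 2) * x 2 := by
      linear_combination q 0 * E1 - p 0 * E2
    obtain ⟨a0, z, hz, hu⟩ := Ideal.mem_span_insert.mp hX0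
    obtain ⟨a1, w, hw, hz'⟩ := Ideal.mem_span_insert.mp hz
    obtain ⟨a2, hw'⟩ := Ideal.mem_span_singleton'.mp hw
    obtain ⟨b0, z', hz2, hv⟩ := Ideal.mem_span_insert.mp hX1
    obtain ⟨b1, w', hw2, hz2'⟩ := Ideal.mem_span_insert.mp hz2
    obtain ⟨b2, hw2'⟩ := Ideal.mem_span_singleton'.mp hw2
    have hu' : (X 0 : MvPolynomial (Fin 2) K) ^ k
        = a0 * (q 1 * p 2 - p 1 * q 2) + a1 * (p 0 * q 2 - q 0 * p 2) + a2 * (q 0 * p 1 - p 0 * q 1) := by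
      rw [hu, hz', ← hw']; ring
    have hv' : (X 1 : MvPolynomial (Fin 2) K) ^ k
        = b0 * (q 1 * p 2 - p 1 * q 2) + b1 * (p 0 * q 2 - q 0 * p 2) + b2 * (q 0 * p 1 - p 0 * q 1) := by
      rw [hv, hz2', ← hw2']; ring
    have hAm : ∀ i, (X 0 : MvPolynomial (Fin 2) K) ^ k * x i
        = (a0 * x 0 + a1 * x 1 + a2 * x 2) * ![q 1 * p 2 - p 1 * q 2, p 0 * q 2 - q 0 * p 2, q 0 * p 1 - p 0 * q 1] i := by
      intro i
      fin_cases i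
      · show (X 0 : MvPolynomial (Fin 2) K) ^ k * x 0
          = (a0 * x 0 + a1 * x 1 + a2 * x 2) * (q 1 * p 2 - p 1 * q 2)
        linear_combination x 0 * hu' + a1 * h01 + a2 * h02
      · show (X 0 : MvPolynomial (Fin 2) K) ^ k * x 1
          = (a0 * x 0 + a1 * x 1 + a2 * x 2) * (p 0 * q 2 - q 0 * p 2)
        linear_combination x 1 * hu' - a0 * h01 + a2 * h12
      · show (X 0 : MvPolynomial (Fin 2) K) ^ k * x 2
          = (a0 * x 0 + a1 * x 1 + a2 * x 2) * (q 0 * p 1 - p 0 * q 1)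
        linear_combination x 2 * hu' - a0 * h02 - a1 * h12
    have hBm : ∀ i, (X 1 : MvPolynomial (Fin 2) K) ^ k * x i
        = (b0 * x 0 + b1 * x 1 + b2 * x 2) * ![q 1 * p 2 - p 1 * q 2, p 0 * q 2 - q 0 * p 2, q 0 * p 1 - p 0 * q 1] i := by
      intro i
      fin_cases i
      · show (X 1 : MvPolynomial (Fin 2) K) ^ k * x 0
          = (b0 * x 0 + b1 * x 1 + b2 * x 2) * (q 1 * p 2 - p 1 * q 2)
        linear_combination x 0 * hv' + b1 * h01 + b2 * h02
      · show (X 1 : MvPolynomial (Fin 2) K) ^ k * x 1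
          = (b0 * x 0 + b1 * x 1 + b2 * x 2) * (p 0 * q 2 - q 0 * p 2)
        linear_combination x 1 * hv' - b0 * h01 + b2 * h12
      · show (X 1 : MvPolynomial (Fin 2) K) ^ k * x 2
          = (b0 * x 0 + b1 * x 1 + b2 * x 2) * (q 0 * p 1 - p 0 * q 1)
        linear_combination x 2 * hv' - b0 * h02 - b1 * h12
    obtain ⟨i, hi⟩ := Function.ne_iff.mp hmne
    have hi' : (![q 1 * p 2 - p 1 * q 2, p 0 * q 2 - q 0 * p 2, q 0 * p 1 - p 0 * q 1] : Fin 3 → MvPolynomial (Fin 2) K) i ≠ 0 := by simpa using hi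
    have key : (X 1 : MvPolynomial (Fin 2) K) ^ k * (a0 * x 0 + a1 * x 1 + a2 * x 2)
        = (X 0 : MvPolynomial (Fin 2) K) ^ k * (b0 * x 0 + b1 * x 1 + b2 * x 2) := by
      refine mul_right_cancel₀ hi' ?_
      calc (X 1 : MvPolynomial (Fin 2) K) ^ k * (a0 * x 0 + a1 * x 1 + a2 * x 2) * ![q 1 * p 2 - p 1 * q 2, p 0 * q 2 - q 0 * p 2, q 0 * p 1 - p 0 * q 1] i
          = (X 1 : MvPolynomial (Fin 2) K) ^ k * ((X 0 : MvPolynomial (Fin 2) K) ^ k * x i) := by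
            rw [hAm i]; ring
        _ = (X 0 : MvPolynomial (Fin 2) K) ^ k * ((X 1 : MvPolynomial (Fin 2) K) ^ k * x i) := by
            ring
        _ = (X 0 : MvPolynomial (Fin 2) K) ^ k * (b0 * x 0 + b1 * x 1 + b2 * x 2) * ![q 1 * p 2 - p 1 * q 2, p 0 * q 2 - q 0 * p 2, q 0 * p 1 - p 0 * q 1] i := by
            rw [hBm i]; ring
    have hdvd : (X 0 : MvPolynomial (Fin 2) K) ^ k ∣ (a0 * x 0 + a1 * x 1 + a2 * x 2) := by
      have hndvd : ¬ (X 0 : MvPolynomial (Fin 2) K) ∣ (X 1 : MvPolynomial (Fin 2) K) ^ k :=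
        fun h => notdvd K ((primeX0 K).dvd_of_dvd_pow h)
      exact (primeX0 K).pow_dvd_of_dvd_mul_left k hndvd ⟨_, key⟩
    obtain ⟨c, hc⟩ := hdvd
    have hxc : ∀ i, x i = c * ![q 1 * p 2 - p 1 * q 2, p 0 * q 2 - q 0 * p 2, q 0 * p 1 - p 0 * q 1] i := by
      intro i
      apply mul_left_cancel₀ hX0ne
      rw [hAm i, hc]; ring
    refine Submodule.mem_span_singleton.mpr ⟨c, ?_⟩
    funext i
    simp only [Pi.smul_apply, smul_eq_mul]
    exact (hxc i).symm
  · rw [Submodule.span_le, Set.singleton_subset_iff]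
    rw [SetLike.mem_coe, LinearMap.mem_ker, Matrix.mulVecLin_apply]
    funext j
    fin_cases j <;>
      · simp [Matrix.mulVec, dotProduct, Fin.sum_univ_three]
        ring
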